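/- Let G − v be a fold of G witnessed by u, and let H be a graph. Identify the face poset of Hom(G−v, H) with the subposet of the face poset of Hom(G,H) consisting of those η with η(v) = η(u). Define α on the face poset of Hom(G,H) by αη(v) = η(u) ∪ η(v) and αη(x) = η(x) for x ≠ v. Then α is well-defined (αη again satisfies the complete-bipartite edge condition) and is an ascending closure operator: monotone, idempotent, and αη ≥ η for all η. -/

import Mathlib

open Classical in
/-- Let `G − v` be a fold of `G` witnessed by `u`, `H` a graph. The map `α` on
the face poset of `Hom(G,H)` with `αη(v) = η(u) ∪ η(v)`, `αη(x) = η(x)` for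
`x ≠ v`, is well defined and is an ascending closure operator: monotone,
idempotent, and `αη ≥ η`. -/
theorem stmt_8 {VG VH : Type*} (G : SimpleGraph VG) (H : SimpleGraph VH)
    (v u : VG) (huv : u ≠ v) (hfold : G.neighborSet v ⊆ G.neighborSet u) :
    letI S : Set (VG → Set VH) :=
      {η | (∀ x, (η x).Nonempty) ∧
        ∀ x y, G.Adj x y → ∀ a ∈ η x, ∀ b ∈ η y, H.Adj a b}
    letI α : (VG → Set VH) → (VG → Set VH) :=
      fun η x => if x = v then η u ∪ η v else η x
    (∀ η ∈ S, α η ∈ S) ∧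
    (∀ η η' : VG → Set VH, η ≤ η' → α η ≤ α η') ∧
    (∀ η, α (α η) = α η) ∧
    (∀ η, η ≤ α η) := by
  dsimp only
  refine ⟨?_, ?_, ?_, ?_⟩
  · rintro η ⟨hne, hedge⟩
    refine ⟨?_, ?_⟩
    · intro x
      by_cases hx : x = v
      · simp only [hx, if_pos rfl]
        exact (hne v).mono Set.subset_union_right
      · simpa only [if_neg hx] using hne x
    · intro x y hxy a ha b hb
      by_cases hx : x = v
      · rw [hx] at hxy
        have hy : y ≠ v := fun h => (G.loopless.irrefl v (h ▸ hxy)).elim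
        simp only [if_pos hx] at ha
        simp only [if_neg hy] at hb
        have huy : G.Adj u y := hfold hxy
        rcases ha with ha | ha
        · exact hedge u y huy a ha b hb
        · exact hedge v y hxy a ha b hb
      · by_cases hy : y = v
        · rw [hy] at hxy
          simp only [if_neg hx] at ha
          simp only [if_pos hy] at hb
          have hux : G.Adj u x := hfold hxy.symm
          rcases hb with hb | hb
          · exact hedge x u hux.symm a ha b hb
          · exact hedge x v hxy a ha b hb
        · simp only [if_neg hx] at ha
          simp only [if_neg hy] at hb
          exact hedge x y hxy a ha b hb
  · intro η η' h x
    by_cases hx : x = v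
    · simp only [hx, if_pos rfl]
      exact Set.union_subset_union (h u) (h v)
    · simp only [if_neg hx]; exact h x
  · intro η
    funext x
    by_cases hx : x = v
    · simp [hx, huv, Set.union_assoc]
    · simp only [if_neg hx]
  · intro η x
    by_cases hx : x = v
    · simp only [hx, if_pos rfl]; exact Set.subset_union_right
    · simp only [if_neg hx]; exact le_refl _
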